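/- Let K be an algebraically closed field equipped with a nontrivial non-archimedean absolute value |·|. Let h ∈ K[z] be a polynomial with h(0) = 0, let r > 0 be a real number and C ≥ 0 be a real number such that |h(w)| ≤ C for every w ∈ K with |w| < r. Then for every z ∈ K with |z| < r, one has |h(z)| ≤ (C/r)·|z|. -/

import Mathlib

private lemma multiset_prod_map_nonneg {α : Type*} (s : Multiset α) (f : α → ℝ)
    (h0 : ∀ a ∈ s, 0 ≤ f a) : 0 ≤ (s.map f).prod := by
  induction s using Multiset.induction with
  | empty => simp
  | cons a s ih =>
    simp only [Multiset.map_cons, Multiset.prod_cons]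
    exact mul_nonneg (h0 a (Multiset.mem_cons_self a s))
      (ih fun b hb => h0 b (Multiset.mem_cons_of_mem hb))

private lemma multiset_prod_map_mono {α : Type*} (s : Multiset α) (f g : α → ℝ)
    (h0 : ∀ a ∈ s, 0 ≤ f a) (hle : ∀ a ∈ s, f a ≤ g a) :
    (s.map f).prod ≤ (s.map g).prod := by
  induction s using Multiset.induction with
  | empty => simp
  | cons a s ih =>
    simp only [Multiset.map_cons, Multiset.prod_cons]
    have hf := h0 a (Multiset.mem_cons_self a s)
    have hg := hle a (Multiset.mem_cons_self a s)
    have hs := ih (fun b hb => h0 b (Multiset.mem_cons_of_mem hb))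
      (fun b hb => hle b (Multiset.mem_cons_of_mem hb))
    exact mul_le_mul hg hs
      (multiset_prod_map_nonneg s f fun b hb => h0 b (Multiset.mem_cons_of_mem hb))
      (le_trans hf hg)

theorem stmt10 (K : Type*) [Field K] [IsAlgClosed K] (v : AbsoluteValue K ℝ)
    (hna : ∀ x y : K, v (x + y) ≤ max (v x) (v y))
    (hnt : ∃ x : K, v x ≠ 0 ∧ v x ≠ 1)
    (h : Polynomial K) (h0 : h.eval 0 = 0)
    (r C : ℝ) (hr : 0 < r) (hC : 0 ≤ C)
    (hb : ∀ w : K, v w < r → v (h.eval w) ≤ C) :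
    ∀ z : K, v z < r → v (h.eval z) ≤ (C / r) * v z := by
  -- ultrametric equality
  have hsub : ∀ x y : K, v (x - y) ≤ max (v x) (v y) := by
    intro x y
    have := hna x (-y)
    rwa [v.map_neg, ← sub_eq_add_neg] at this
  have hmax : ∀ x y : K, v y < v x → v (x - y) = v x := by
    intro x y hxy
    refine le_antisymm (by simpa [max_eq_left hxy.le] using hsub x y) ?_
    have h1 : v x ≤ max (v (x - y)) (v y) := by
      have := hna (x - y) y
      rwa [sub_add_cancel] at this
    rcases max_cases (v (x - y)) (v y) with ⟨he, _⟩ | ⟨he, _⟩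
    · rw [he] at h1; exact h1
    · rw [he] at h1; exact absurd h1 (not_le.mpr hxy)
  have hmaxne : ∀ x y : K, v x ≠ v y → v (x - y) = max (v x) (v y) := by
    intro x y hne
    rcases lt_or_gt_of_ne hne with hlt | hlt
    · rw [max_eq_right hlt.le, ← v.map_neg, neg_sub]
      exact hmax y x hlt
    · rw [max_eq_left hlt.le]
      exact hmax x y hlt
  -- density of value group
  have hdense : ∀ a b : ℝ, 0 < a → a < b → ∃ w : K, a ≤ v w ∧ v w < b := by
    intro a b ha hab
    obtain ⟨x, hx0, hx1⟩ := hnt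
    have hxne : x ≠ 0 := fun hx => hx0 (by simp [hx])
    have hvx : 0 < v x := v.pos hxne
    -- get y with 1 < v y < b / a
    have hba : 1 < b / a := (one_lt_div ha).mpr hab
    obtain ⟨c, hc1, hcx⟩ : ∃ c : K, 1 < v c ∧ c ≠ 0 := by
      rcases lt_or_gt_of_ne hx1 with hlt | hlt
      · refine ⟨x⁻¹, ?_, inv_ne_zero hxne⟩
        rw [map_inv₀]
        exact (one_lt_inv₀ hvx).mpr hlt
      · exact ⟨x, hlt, hxne⟩
    obtain ⟨n, hn⟩ := pow_unbounded_of_one_lt (v c) hba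
    have hn0 : 0 < n := by
      by_contra hn0
      push_neg at hn0
      interval_cases n
      simp at hn
      exact absurd hn (not_lt.mpr hc1.le)
    obtain ⟨y, hy⟩ := IsAlgClosed.exists_pow_nat_eq c hn0
    have hvy : v y ^ n = v c := by rw [← map_pow, hy]
    have hy1 : 1 < v y := by
      by_contra hy1
      push_neg at hy1
      have : v y ^ n ≤ 1 := pow_le_one₀ (v.nonneg y) hy1
      rw [hvy] at this
      exact absurd this (not_le.mpr hc1)
    have hyba : v y < b / a := by
      by_contra hyy
      push_neg at hyy
      have : (b / a) ^ n ≤ v y ^ n := pow_le_pow_left₀ (by positivity) hyy n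
      rw [hvy] at this
      exact absurd (lt_of_lt_of_le hn this) (lt_irrefl _)
    have hyne : y ≠ 0 := by
      intro hy0
      rw [hy0] at hy1
      simp at hy1
      linarith
    obtain ⟨k, hk1, hk2⟩ := exists_mem_Ioc_zpow ha hy1
    refine ⟨y ^ (k + 1), ?_, ?_⟩
    · rw [map_zpow₀]
      exact hk2
    · rw [map_zpow₀, zpow_add_one₀ (by positivity : v y ≠ 0)]
      calc v y ^ k * v y < a * (b / a) := by
            exact mul_lt_mul' hk1.le hyba (v.nonneg y) ha
        _ = b := by field_simp
  -- avoid a finite set of values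
  have havoid : ∀ S : Finset ℝ, ∀ a : ℝ, 0 < a → a < r →
      ∃ w : K, v w ∉ S ∧ a ≤ v w ∧ v w < r := by
    intro S
    induction S using Finset.strongInduction with
    | _ S ih =>
      intro a ha har
      obtain ⟨w, hw1, hw2⟩ := hdense a r ha har
      by_cases hmem : v w ∈ S
      · have hvw : 0 < v w := lt_of_lt_of_le ha hw1
        obtain ⟨w', hw'1, hw'2, hw'3⟩ := ih (S.erase (v w)) (Finset.erase_ssubset hmem)
          ((v w + r)/2) (by linarith) (by linarith)
        refine ⟨w', ?_, le_trans hw1 (by linarith), hw'3⟩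
        intro hmem'
        refine hw'1 (Finset.mem_erase.mpr ⟨?_, hmem'⟩)
        intro he
        rw [he] at hw'2
        linarith
      · exact ⟨w, hmem, hw1, hw2⟩
  by_cases hh : h = 0
  · intro z hz
    simp only [hh, Polynomial.eval_zero, map_zero]
    exact mul_nonneg (div_nonneg hC hr.le) (v.nonneg z)
  intro z hz
  rcases eq_or_ne z 0 with rfl | hz0
  · simp [h0]
  have hvz : 0 < v z := v.pos hz0
  classical
  -- factorization over roots
  have hsplit := Polynomial.Splits.eq_prod_roots (IsAlgClosed.splits h)
  have h0mem : (0:K) ∈ h.roots := Polynomial.mem_roots'.mpr ⟨hh, h0⟩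
  set L := h.leadingCoeff with hL
  set s : Multiset K := h.roots.erase 0 with hs
  have hfact : ∀ x : K, v (h.eval x) = v L * (v x * (s.map fun a => v (x - a)).prod) := by
    intro x
    conv_lhs => rw [hsplit]
    rw [Polynomial.eval_mul, Polynomial.eval_C, v.map_mul, Polynomial.eval_multiset_prod,
      Multiset.map_map, map_multiset_prod, Multiset.map_map]
    congr 1
    conv_lhs => rw [← Multiset.cons_erase h0mem]
    simp [Function.comp]
    exact Or.inl rfl
  -- comparison at a good point w
  have hkey : ∀ t : ℝ, v z ≤ t → t < r → v (h.eval z) * t ≤ C * v z := by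
    intro t ht htr
    obtain ⟨w, hwS, hw1, hw2⟩ := havoid (h.roots.toFinset.image v) (max t (v z))
      (lt_of_lt_of_le hvz (le_max_right _ _)) (max_lt htr hz)
    have hwt : t ≤ v w := le_trans (le_max_left _ _) hw1
    have hwz : v z ≤ v w := le_trans (le_max_right _ _) hw1
    have hwne : ∀ a ∈ h.roots, v w ≠ v a := by
      intro a ha he
      exact hwS (Finset.mem_image.mpr ⟨a, Multiset.mem_toFinset.mpr ha, he.symm⟩)
    have hcmp : ((s.map fun a => v (z - a))).prod ≤ ((s.map fun a => v (w - a))).prod := by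
      apply multiset_prod_map_mono
      · intro a _; exact v.nonneg _
      · intro a haa
        have haroot : a ∈ h.roots := Multiset.mem_of_mem_erase haa
        calc v (z - a) ≤ max (v z) (v a) := hsub z a
          _ ≤ max (v w) (v a) := max_le_max hwz le_rfl
          _ = v (w - a) := (hmaxne w a (hwne a haroot)).symm
    have hPw : 0 ≤ ((s.map fun a => v (w - a))).prod :=
      multiset_prod_map_nonneg _ _ (fun a _ => v.nonneg _)
    have hBw : v (h.eval w) ≤ C := hb w hw2
    have h1 : v (h.eval z) * v w ≤ v (h.eval w) * v z := by
      rw [hfact z, hfact w]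
      have hnn : 0 ≤ v L * v z * v w := by
        have := v.nonneg L; have := v.nonneg w; positivity
      calc v L * (v z * (s.map fun a => v (z - a)).prod) * v w
          = (v L * v z * v w) * (s.map fun a => v (z - a)).prod := by ring
        _ ≤ (v L * v z * v w) * (s.map fun a => v (w - a)).prod :=
            mul_le_mul_of_nonneg_left hcmp hnn
        _ = v L * (v w * (s.map fun a => v (w - a)).prod) * v z := by ring
    calc v (h.eval z) * t ≤ v (h.eval z) * v w :=
          mul_le_mul_of_nonneg_left hwt (v.nonneg _)
      _ ≤ v (h.eval w) * v z := h1
      _ ≤ C * v z := mul_le_mul_of_nonneg_right hBw hvz.le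
  -- take the limit t → r
  have hfin : v (h.eval z) * r ≤ C * v z := by
    by_contra hcon
    push_neg at hcon
    set A := v (h.eval z) with hA
    set B := C * v z with hB
    have hB0 : 0 ≤ B := mul_nonneg hC hvz.le
    have hApos : 0 < A := by
      rcases lt_or_ge 0 A with h' | h'
      · exact h'
      · nlinarith
    have hBA : B / A < r := (div_lt_iff₀ hApos).mpr (by nlinarith)
    set t := max (v z) ((B/A + r)/2) with htdef
    have htr : t < r := max_lt hz (by linarith)
    have := hkey t (le_max_left _ _) htr
    have ht2 : t ≤ B / A := (le_div_iff₀ hApos).mpr (by nlinarith)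
    have ht3 : (B/A + r)/2 ≤ t := le_max_right _ _
    linarith
  rw [div_mul_eq_mul_div, le_div_iff₀ hr]
  exact hfin
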